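/- arXiv:1410.7174 — 4 statements merged into one kernel-verified Lean document; each statement's English description precedes it below -/
import Mathlib

section
/- Let f : 2^{[N]} → ℝ be submodular with f(∅) = 0, and let π be a permutation of [N]. Define x ∈ ℝ^N by x_{π(i)} = f({π(1),...,π(i)}) - f({π(1),...,π(i-1)}) for i = 1,...,N. Then x lies in the submodular polyhedron P(f) = { x ∈ ℝ^N : Σ_{i∈A} x_i ≤ f(A) for all A ⊆ [N] }. -/
/-- the greedy vector associated with a permutation `π` lies in the
submodular polyhedron `P(f)`.  Here `chain i = {π 0, …, π (i-1)}` (the first `i`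
elements in the order `π`), and the greedy vector is
`x (π i) = f (chain (i+1)) - f (chain i)`, i.e.
`x j = f (chain (π⁻¹ j + 1)) - f (chain (π⁻¹ j))`. -/
theorem greedy_mem_submodular_polyhedron (N : ℕ) (f : Finset (Fin N) → ℝ)
    (hf : ∀ A B : Finset (Fin N), f A + f B ≥ f (A ∪ B) + f (A ∩ B))
    (h0 : f ∅ = 0) (π : Equiv.Perm (Fin N))
    (chain : ℕ → Finset (Fin N))
    (hchain : ∀ i, chain i = Finset.univ.filter (fun j : Fin N => (π.symm j : ℕ) < i))
    (x : Fin N → ℝ)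
    (hx : ∀ j : Fin N, x j = f (chain ((π.symm j : ℕ) + 1)) - f (chain (π.symm j : ℕ))) :
    ∀ A : Finset (Fin N), ∑ i ∈ A, x i ≤ f A := by
  intro A
  induction A using Finset.strongInductionOn with
  | _ A ih =>
  rcases A.eq_empty_or_nonempty with rfl | hA
  · simp [h0]
  obtain ⟨j, hjA, hjmax⟩ := Finset.exists_max_image A (fun j => (π.symm j : ℕ)) hA
  set k : ℕ := (π.symm j : ℕ) with hk
  have hne : ∀ a : Fin N, a ≠ j → (π.symm a : ℕ) ≠ k := by
    intro a ha h
    exact ha (π.symm.injective (Fin.val_injective h))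
  have hunion : A ∪ chain k = chain (k + 1) := by
    ext a
    rw [hchain, hchain]
    simp only [Finset.mem_union, Finset.mem_filter, Finset.mem_univ, true_and]
    constructor
    · rintro (h | h)
      · have := hjmax a h
        omega
      · omega
    · intro h
      by_cases haj : a = j
      · exact Or.inl (haj ▸ hjA)
      · exact Or.inr (by have := hne a haj; omega)
  have hinter : A ∩ chain k = A.erase j := by
    ext a
    rw [hchain]
    simp only [Finset.mem_inter, Finset.mem_filter, Finset.mem_univ, true_and,
      Finset.mem_erase]
    constructor
    · rintro ⟨ha, hlt⟩
      exact ⟨fun h => by rw [h] at hlt; omega, ha⟩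
    · rintro ⟨haj, ha⟩
      exact ⟨ha, by have := hjmax a ha; have := hne a haj; omega⟩
  have hsum : ∑ i ∈ A, x i = (∑ i ∈ A.erase j, x i) + x j :=
    (Finset.sum_erase_add A x hjA).symm
  have hih := ih (A.erase j) (Finset.erase_ssubset hjA)
  have hsm := hf A (chain k)
  rw [hunion, hinter] at hsm
  rw [hsum, hx j]
  linarith
end

section
/- Let f : 2^{[N]} → ℝ be submodular with f(∅) = 0, and let w ∈ ℝ^N with coordinates ordered as w_{π(1)} ≥ w_{π(2)} ≥ ... ≥ w_{π(N)} for a permutation π. Then the greedy vector x given by x_{π(i)} = f({π(1),...,π(i)}) - f({π(1),...,π(i-1)}) maximizes the linear functional x ↦ wᵀx over the submodular polyhedron P(f); that is, wᵀx = max_{y ∈ P(f)} wᵀy. -/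
open Finset


/-- for nonnegative weights `w` sorted nonincreasingly by `π`, the greedy
vector `x` maximizes `y ↦ wᵀy` over the submodular polyhedron `P(f)`:
`wᵀx` is the greatest element of the set of values `wᵀy`, `y ∈ P(f)`. -/
theorem greedy_maximizes_over_polyhedron (N : ℕ) (f : Finset (Fin N) → ℝ)
    (hf : ∀ A B : Finset (Fin N), f A + f B ≥ f (A ∪ B) + f (A ∩ B))
    (h0 : f ∅ = 0) (π : Equiv.Perm (Fin N)) (w : Fin N → ℝ)
    (hw : ∀ i, 0 ≤ w i)
    (hsort : ∀ i j : Fin N, i ≤ j → w (π j) ≤ w (π i))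
    (chain : ℕ → Finset (Fin N))
    (hchain : ∀ i, chain i = Finset.univ.filter (fun j : Fin N => (π.symm j : ℕ) < i))
    (x : Fin N → ℝ)
    (hx : ∀ j : Fin N, x j = f (chain ((π.symm j : ℕ) + 1)) - f (chain (π.symm j : ℕ))) :
    IsGreatest {v : ℝ | ∃ y : Fin N → ℝ,
        (∀ A : Finset (Fin N), ∑ i ∈ A, y i ≤ f A) ∧ v = ∑ i, w i * y i}
      (∑ i, w i * x i) := by
  -- basic facts about the chain
  have hmem : ∀ (j : Fin N) (m : ℕ), j ∈ chain m ↔ (π.symm j : ℕ) < m := by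
    intro j m; rw [hchain]; simp
  have hC0 : chain 0 = ∅ := by
    rw [hchain]; ext j; simp
  have hCuniv : ∀ m, N ≤ m → chain m = Finset.univ := by
    intro m hm; ext j
    simp only [mem_univ, iff_true, hmem]
    exact lt_of_lt_of_le (π.symm j).isLt hm
  have hnot : ∀ (m : ℕ) (hm : m < N), π ⟨m, hm⟩ ∉ chain m := by
    intro m hm h
    rw [hmem] at h
    simp at h
  have hCsucc : ∀ (m : ℕ) (hm : m < N),
      chain (m + 1) = insert (π ⟨m, hm⟩) (chain m) := by
    intro m hm
    ext j
    simp only [hmem, mem_insert]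
    constructor
    · intro h
      rcases Nat.lt_succ_iff_lt_or_eq.mp h with h | h
      · exact Or.inr h
      · left
        have : π.symm j = ⟨m, hm⟩ := Fin.ext h
        have := congrArg π this
        simpa using this
    · rintro (rfl | h)
      · simp
      · omega
  have hxval : ∀ (m : ℕ) (hm : m < N),
      x (π ⟨m, hm⟩) = f (chain (m + 1)) - f (chain m) := by
    intro m hm
    have := hx (π ⟨m, hm⟩)
    simpa using this
  -- telescoping: partial sums of x give f on the chain
  have hTx : ∀ m, ∑ j ∈ chain m, x j = f (chain m) := by
    intro m
    induction m with
    | zero => rw [hC0]; simp [h0]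
    | succ m ih =>
      by_cases hm : m < N
      · rw [hCsucc m hm, Finset.sum_insert (hnot m hm), hxval m hm, ih,
          hCsucc m hm]
        ring
      · have h1 : chain (m + 1) = chain m := by
          rw [hCuniv m (by omega), hCuniv (m + 1) (by omega)]
        rw [h1, ih]
  -- x belongs to the polyhedron
  have hxP : ∀ A : Finset (Fin N), ∑ i ∈ A, x i ≤ f A := by
    have key : ∀ (m : ℕ) (A : Finset (Fin N)),
        ∑ i ∈ A ∩ chain m, x i ≤ f (A ∩ chain m) := by
      intro m
      induction m with
      | zero => intro A; rw [hC0]; simp [h0]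
      | succ m ih =>
        intro A
        by_cases hm : m < N
        · set e := π ⟨m, hm⟩ with he
          by_cases hA : e ∈ A
          · have h1 : A ∩ chain (m + 1) = insert e (A ∩ chain m) := by
              rw [hCsucc m hm]
              ext j
              simp only [mem_inter, mem_insert]
              constructor
              · rintro ⟨hj, rfl | hj2⟩
                · exact Or.inl rfl
                · exact Or.inr ⟨hj, hj2⟩
              · rintro (rfl | ⟨hj, hj2⟩)
                · exact ⟨hA, Or.inl rfl⟩
                · exact ⟨hj, Or.inr hj2⟩
            have he2 : e ∉ A ∩ chain m := fun h =>
              hnot m hm (Finset.mem_of_mem_inter_right h)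
            rw [h1, Finset.sum_insert he2]
            have hsub := hf (insert e (A ∩ chain m)) (chain m)
            have hu : insert e (A ∩ chain m) ∪ chain m = chain (m + 1) := by
              rw [hCsucc m hm]
              ext j
              simp only [mem_union, mem_insert, mem_inter]
              tauto
            have hi : insert e (A ∩ chain m) ∩ chain m = A ∩ chain m := by
              ext j
              simp only [mem_inter, mem_insert]
              constructor
              · rintro ⟨rfl | ⟨hj, _⟩, hj2⟩
                · exact absurd hj2 (hnot m hm)
                · exact ⟨hj, hj2⟩
              · rintro ⟨hj, hj2⟩
                exact ⟨Or.inr ⟨hj, hj2⟩, hj2⟩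
            rw [hu, hi] at hsub
            have hxe : x e = f (chain (m + 1)) - f (chain m) := hxval m hm
            have := ih A
            linarith
          · have h1 : A ∩ chain (m + 1) = A ∩ chain m := by
              rw [hCsucc m hm]
              ext j
              simp only [mem_inter, mem_insert]
              constructor
              · rintro ⟨hj, rfl | hj2⟩
                · exact absurd hj hA
                · exact ⟨hj, hj2⟩
              · rintro ⟨hj, hj2⟩
                exact ⟨hj, Or.inr hj2⟩
            rw [h1]; exact ih A
        · have h1 : chain (m + 1) = chain m := by
            rw [hCuniv m (by omega), hCuniv (m + 1) (by omega)]
          rw [h1]; exact ih A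
    intro A
    have := key N A
    rwa [hCuniv N le_rfl, Finset.inter_univ] at this
  -- extended weight sequence
  set W : ℕ → ℝ := fun k => if h : k < N then w (π ⟨k, h⟩) else 0 with hWdef
  have hWN : W N = 0 := by simp [hWdef]
  have hWmono : ∀ k, W (k + 1) ≤ W k := by
    intro k
    by_cases h1 : k + 1 < N
    · have h2 : k < N := by omega
      simp only [hWdef, dif_pos h1, dif_pos h2]
      exact hsort ⟨k, h2⟩ ⟨k + 1, h1⟩ (by simp)
    · simp only [hWdef, dif_neg h1]
      by_cases h2 : k < N
      · simp only [dif_pos h2]; exact hw _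
      · simp only [dif_neg h2]; exact le_refl 0
  -- Abel summation identity along the chain
  have habel : ∀ (z : Fin N → ℝ) (m : ℕ), m ≤ N →
      (∑ k ∈ Finset.range m, (W k - W (k + 1)) * (∑ j ∈ chain (k + 1), z j))
        + W m * (∑ j ∈ chain m, z j) = ∑ j ∈ chain m, w j * z j := by
    intro z m
    induction m with
    | zero => intro _; rw [hC0]; simp
    | succ m ih =>
      intro hm1
      have hm : m < N := hm1
      have ih' := ih (by omega)
      rw [Finset.sum_range_succ]
      have hins : ∑ j ∈ chain (m + 1), z j = z (π ⟨m, hm⟩) + ∑ j ∈ chain m, z j := by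
        rw [hCsucc m hm, Finset.sum_insert (hnot m hm)]
      have hins' : ∑ j ∈ chain (m + 1), w j * z j
          = w (π ⟨m, hm⟩) * z (π ⟨m, hm⟩) + ∑ j ∈ chain m, w j * z j := by
        rw [hCsucc m hm, Finset.sum_insert (hnot m hm)]
      have hWm : W m = w (π ⟨m, hm⟩) := by simp [hWdef, hm]
      rw [hins, hins', ← ih', hWm]
      ring
  have hsum : ∀ z : Fin N → ℝ, ∑ i, w i * z i
      = ∑ k ∈ Finset.range N, (W k - W (k + 1)) * (∑ j ∈ chain (k + 1), z j) := by
    intro z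
    have := habel z N le_rfl
    rw [hWN, hCuniv N le_rfl] at this
    simpa using this.symm
  constructor
  · exact ⟨x, hxP, rfl⟩
  · rintro v ⟨y, hy, rfl⟩
    rw [hsum y, hsum x]
    apply Finset.sum_le_sum
    intro k _
    have hcoef : 0 ≤ W k - W (k + 1) := by linarith [hWmono k]
    have : ∑ j ∈ chain (k + 1), y j ≤ ∑ j ∈ chain (k + 1), x j := by
      rw [hTx (k + 1)]
      exact hy (chain (k + 1))
    exact mul_le_mul_of_nonneg_left this hcoef
end

section
/- Let f_s : 2^{[N]} → ℝ≥0 for s ∈ [0 : 2^N - 1] be submodular set functions, and define C' = max over probability vectors λ ∈ Δ_{2^N - 1} of min_{A ⊆ [N]} Σ_s λ_s f_s(A). Then there exists an optimal λ* achieving C' with at most N+1 strictly positive entries, provided C' > 0. -/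
open Finset

private lemma range_setOf_eq {α β : Type*} (F : α → β) : {u : β | ∃ a, u = F a} = Set.range F := by
  ext u; simp [eq_comm, Set.range]

private lemma mval_exists {α : Type*} [Fintype α] [Nonempty α] (F : α → ℝ) :
    (∃ a, sInf {u : ℝ | ∃ a, u = F a} = F a) ∧ ∀ a, sInf {u : ℝ | ∃ a, u = F a} ≤ F a := by
  have hfin : {u : ℝ | ∃ a, u = F a}.Finite := by
    rw [range_setOf_eq]; exact Set.finite_range F
  have hne : {u : ℝ | ∃ a, u = F a}.Nonempty := ⟨F Classical.ofNonempty, ⟨_, rfl⟩⟩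
  constructor
  · obtain ⟨a, ha⟩ := hne.csInf_mem hfin
    exact ⟨a, ha⟩
  · intro a
    exact csInf_le hfin.bddBelow ⟨a, rfl⟩

private lemma continuous_finset_inf' {ι κ : Type*} [Fintype κ] (s : Finset ι) (hs : s.Nonempty)
    (F : ι → (κ → ℝ) → ℝ) (hF : ∀ i, Continuous (F i)) :
    Continuous fun l => s.inf' hs fun i => F i l := by
  induction hs using Finset.Nonempty.cons_induction with
  | singleton i => simpa using hF i
  | cons i s hi hs ih =>
      have : (fun l => (Finset.cons i s hi).inf' (Finset.cons_nonempty hi) fun j => F j l)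
          = fun l => min (F i l) (s.inf' hs fun j => F j l) := by
        funext l; rw [Finset.inf'_cons]
      rw [this]
      exact (hF i).min ih

private lemma sInf_eq_inf' {α : Type*} [Fintype α] [Nonempty α] (F : α → ℝ) :
    sInf {u : ℝ | ∃ a, u = F a} = Finset.univ.inf' univ_nonempty F := by
  obtain ⟨⟨a, ha⟩, hle⟩ := mval_exists F
  apply le_antisymm
  · obtain ⟨b, _, hb⟩ := exists_mem_eq_inf' univ_nonempty F
    rw [hb]; exact hle b
  · rw [ha]; exact inf'_le _ (mem_univ a)

/-- Build a saturated chain in a finite union-closed family from `D` up to the top `T`. -/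
private lemma exists_chain {N : ℕ} (M : Finset (Finset (Fin N))) (hM : M.Nonempty)
    (T : Finset (Fin N)) (hT : T ∈ M) (hTtop : ∀ A ∈ M, A ⊆ T) :
    ∀ n : ℕ, ∀ D ∈ M, (T \ D).card ≤ n →
      ∃ (k : ℕ) (c : ℕ → Finset (Fin N)),
        k ≤ (T \ D).card ∧ c 0 = D ∧ c k = T ∧ (∀ i ≤ k, c i ∈ M) ∧
        (∀ i < k, c i ⊆ c (i + 1)) ∧
        (∀ i < k, ∀ B ∈ M, c i ⊆ B → B ⊆ c (i + 1) → B = c i ∨ B = c (i + 1)) := by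
  intro n
  induction n with
  | zero =>
      intro D hD hcard
      have hDT : D = T := by
        have h1 : T \ D = ∅ := card_eq_zero.mp (Nat.le_zero.mp hcard)
        exact (hTtop D hD).antisymm (sdiff_eq_empty_iff_subset.mp h1)
      exact ⟨0, fun _ => T, Nat.zero_le _, by rw [hDT], rfl,
        fun i hi => by simpa using hT, fun i hi => absurd hi (Nat.not_lt_zero i),
        fun i hi => absurd hi (Nat.not_lt_zero i)⟩
  | succ n ih =>
      intro D hD hcard
      by_cases hDT : D = T
      · exact ⟨0, fun _ => T, Nat.zero_le _, by rw [hDT], rfl,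
          fun i hi => by simpa using hT, fun i hi => absurd hi (Nat.not_lt_zero i),
          fun i hi => absurd hi (Nat.not_lt_zero i)⟩
      -- pick B0 of minimal card among strict supersets of D in M
      have hne : (M.filter fun B => D ⊂ B).Nonempty := by
        refine ⟨T, mem_filter.mpr ⟨hT, ?_⟩⟩
        exact lt_of_le_of_ne (hTtop D hD) hDT
      obtain ⟨B0, hB0mem, hB0min⟩ := Finset.exists_min_image _ (fun B => B.card) hne
      obtain ⟨hB0M, hDB0⟩ := mem_filter.mp hB0mem
      have hB0T : B0 ⊆ T := hTtop B0 hB0M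
      have hlt : (T \ B0).card < (T \ D).card := by
        apply card_lt_card
        constructor
        · exact sdiff_subset_sdiff Subset.rfl hDB0.subset
        · intro hsub
          obtain ⟨x, hxB0, hxD⟩ := exists_of_ssubset hDB0
          have hxT : x ∈ T := hB0T hxB0
          have : x ∈ T \ B0 := hsub (mem_sdiff.mpr ⟨hxT, hxD⟩)
          exact (mem_sdiff.mp this).2 hxB0
      obtain ⟨k', c', hk', hc0, hck, hcM, hmono, hbetw⟩ :=
        ih B0 hB0M (Nat.lt_succ_iff.mp (lt_of_lt_of_le hlt hcard))
      refine ⟨k' + 1, fun i => if i = 0 then D else c' (i - 1), ?_, by simp, ?_, ?_, ?_, ?_⟩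
      · omega
      · simp [hck]
      · rintro i hi
        rcases Nat.eq_zero_or_pos i with h0 | h0
        · simp [h0, hD]
        · have : 1 ≤ i := h0
          simp only [Nat.pos_iff_ne_zero.mp h0, if_neg (Nat.pos_iff_ne_zero.mp h0)]
          exact hcM (i - 1) (by omega)
      · intro i hi
        rcases Nat.eq_zero_or_pos i with h0 | h0
        · subst h0; simpa [hc0] using hDB0.subset
        · have h1 : i ≠ 0 := Nat.pos_iff_ne_zero.mp h0
          have h2 : i + 1 ≠ 0 := by omega
          simp only [if_neg h1, if_neg h2]
          have : i - 1 + 1 = i + 1 - 1 := by omega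
          rw [show i + 1 - 1 = (i-1) + 1 by omega]
          exact hmono (i - 1) (by omega)
      · intro i hi B hBM h1 h2
        rcases Nat.eq_zero_or_pos i with h0 | h0
        · subst h0
          simp only [if_pos rfl] at h1
          simp only [if_neg one_ne_zero] at h2 ⊢
          simp only [Nat.sub_self, hc0] at h2 ⊢
          by_cases hBD : B = D
          · exact Or.inl (by simp [hBD])
          · right
            have hDB : D ⊂ B := lt_of_le_of_ne h1 (Ne.symm hBD)
            have := hB0min B (mem_filter.mpr ⟨hBM, hDB⟩)
            exact eq_of_subset_of_card_le h2 this
        · have h1' : i ≠ 0 := Nat.pos_iff_ne_zero.mp h0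
          have h2' : i + 1 ≠ 0 := by omega
          simp only [if_neg h1', if_neg h2'] at h1 h2 ⊢
          rw [show i + 1 - 1 = (i-1) + 1 by omega] at h2 ⊢
          exact hbetw (i - 1) (by omega) B hBM h1 h2

private lemma perp_of_chain {N : ℕ} (f : Fin (2 ^ N) → Finset (Fin N) → ℝ)
    (M : Finset (Finset (Fin N)))
    (hMu : ∀ A ∈ M, ∀ B ∈ M, A ∪ B ∈ M) (hMi : ∀ A ∈ M, ∀ B ∈ M, A ∩ B ∈ M)
    (μ : Fin (2 ^ N) → ℝ)
    (hmod : ∀ s, μ s ≠ 0 → ∀ A ∈ M, ∀ B ∈ M, f s A + f s B = f s (A ∪ B) + f s (A ∩ B))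
    (k : ℕ) (c : ℕ → Finset (Fin N))
    (hc0 : ∀ A ∈ M, c 0 ⊆ A) (hck : ∀ A ∈ M, A ⊆ c k) (hcM : ∀ i ≤ k, c i ∈ M)
    (hmono : ∀ i < k, c i ⊆ c (i + 1))
    (hbetw : ∀ i < k, ∀ B ∈ M, c i ⊆ B → B ⊆ c (i + 1) → B = c i ∨ B = c (i + 1))
    (hperp : ∀ j ≤ k, ∑ s, μ s * f s (c j) = 0) :
    ∀ A ∈ M, ∑ s, μ s * f s A = 0 := by
  intro A hA
  have key : ∀ i ≤ k, ∑ s, μ s * f s (A ∪ c (k - i)) = 0 := by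
    intro i
    induction i with
    | zero =>
        intro _
        rw [Nat.sub_zero, union_eq_right.mpr (hck A hA)]
        exact hperp k le_rfl
    | succ i ih =>
        intro hik
        set j := k - (i + 1) with hjdef
        have hj1 : j + 1 = k - i := by omega
        have hjk : j < k := by omega
        have hXM : A ∪ c j ∈ M := hMu A hA _ (hcM j hjk.le)
        have hc1M : c (j + 1) ∈ M := hcM (j + 1) (by omega)
        have hBM : (A ∪ c j) ∩ c (j + 1) ∈ M := hMi _ hXM _ hc1M
        have hsub1 : c j ⊆ (A ∪ c j) ∩ c (j + 1) :=
          subset_inter subset_union_right (hmono j hjk)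
        have hBor := hbetw j hjk _ hBM hsub1 inter_subset_right
        have hun : (A ∪ c j) ∪ c (j + 1) = A ∪ c (j + 1) := by
          rw [union_assoc, union_eq_right.mpr (hmono j hjk)]
        have hsum : ∑ s, μ s * f s (A ∪ c j)
            = ∑ s, μ s * (f s (A ∪ c (j + 1)) + f s ((A ∪ c j) ∩ c (j + 1)) - f s (c (j + 1))) := by
          refine Finset.sum_congr rfl fun s _ => ?_
          by_cases hs : μ s = 0
          · simp [hs]
          · have hm := hmod s hs _ hXM _ hc1M
            rw [hun] at hm
            have : f s (A ∪ c j) = f s (A ∪ c (j + 1)) + f s ((A ∪ c j) ∩ c (j + 1)) - f s (c (j + 1)) := by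
              linarith
            rw [this]
        have hB0 : ∑ s, μ s * f s ((A ∪ c j) ∩ c (j + 1)) = 0 := by
          rcases hBor with h | h
          · rw [h]; exact hperp j hjk.le
          · rw [h]; exact hperp (j + 1) (by omega)
        have hih : ∑ s, μ s * f s (A ∪ c (j + 1)) = 0 := by
          rw [hj1]; exact ih (by omega)
        have hcj1 : ∑ s, μ s * f s (c (j + 1)) = 0 := hperp (j + 1) (by omega)
        calc ∑ s, μ s * f s (A ∪ c j)
            = ∑ s, μ s * (f s (A ∪ c (j + 1)) + f s ((A ∪ c j) ∩ c (j + 1)) - f s (c (j + 1))) := hsum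
          _ = (∑ s, μ s * f s (A ∪ c (j + 1))) + (∑ s, μ s * f s ((A ∪ c j) ∩ c (j + 1)))
              - ∑ s, μ s * f s (c (j + 1)) := by
                simp only [mul_sub, mul_add, Finset.sum_sub_distrib, Finset.sum_add_distrib]
          _ = 0 := by rw [hB0, hih, hcj1]; ring
  have := key k le_rfl
  rwa [Nat.sub_self, union_eq_left.mpr (hc0 A hA)] at this

-- Case A helper: perturbing with nonzero total mass contradicts optimality.
-- Stated abstractly: if l is optimal (value C' = max), μ is supported on supp l,
-- ⟨μ, f·(A)⟩ = 0 for all minimizing A, and ∑ μ < 0, then contradiction.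
set_option maxHeartbeats 1000000 in
private lemma no_neg_mass {N : ℕ} (f : Fin (2 ^ N) → Finset (Fin N) → ℝ)
    (C' : ℝ) (hpos : 0 < C')
    (l : Fin (2 ^ N) → ℝ) (hl0 : ∀ s, 0 ≤ l s) (hlsum : ∑ s, l s = 1)
    (hgle : ∀ A : Finset (Fin N), C' ≤ ∑ s, l s * f s A)
    (hmvle : ∀ l' : Fin (2 ^ N) → ℝ, ((∀ s, 0 ≤ l' s) ∧ ∑ s, l' s = 1) →
      ∃ A : Finset (Fin N), (∑ s, l' s * f s A) ≤ C')
    (ν : Fin (2 ^ N) → ℝ) (hνpos : ∀ s, ν s ≠ 0 → 0 < l s)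
    (hνperp : ∀ A : Finset (Fin N), (∑ s, l s * f s A) = C' → (∑ s, ν s * f s A) = 0)
    (hνσ : ∑ s, ν s < 0) : False := by
  classical
  set σ := ∑ s, ν s with hσdef
  have E1 : ∀ᶠ δ in nhdsWithin (0 : ℝ) (Set.Ioi 0),
      ∀ s ∈ (univ : Finset (Fin (2 ^ N))), 0 ≤ l s + δ * ν s := by
    rw [Finset.eventually_all]
    intro s _
    by_cases hν : ν s = 0
    · exact Filter.Eventually.of_forall fun δ => by simp [hν, hl0 s]
    · have hls := hνpos s hν
      have ht : Filter.Tendsto (fun δ : ℝ => l s + δ * ν s)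
          (nhdsWithin 0 (Set.Ioi 0)) (nhds (l s)) := by
        have hcont : Continuous fun δ : ℝ => l s + δ * ν s := by continuity
        have := hcont.tendsto 0
        simp only [zero_mul, add_zero] at this
        exact this.mono_left nhdsWithin_le_nhds
      exact (ht.eventually_const_lt hls).mono fun δ h => h.le
  have E2 : ∀ᶠ δ in nhdsWithin (0 : ℝ) (Set.Ioi 0), 0 < 1 + δ * σ := by
    have ht : Filter.Tendsto (fun δ : ℝ => 1 + δ * σ)
        (nhdsWithin 0 (Set.Ioi 0)) (nhds 1) := by
      have hcont : Continuous fun δ : ℝ => 1 + δ * σ := by continuity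
      have := hcont.tendsto 0
      simp only [zero_mul, add_zero] at this
      exact this.mono_left nhdsWithin_le_nhds
    exact ht.eventually_const_lt one_pos
  have E3 : ∀ᶠ δ in nhdsWithin (0 : ℝ) (Set.Ioi 0), δ * σ < 0 :=
    eventually_mem_nhdsWithin.mono fun δ hδ => mul_neg_of_pos_of_neg hδ hνσ
  have E4 : ∀ᶠ δ in nhdsWithin (0 : ℝ) (Set.Ioi 0),
      ∀ A ∈ (univ.filter fun A : Finset (Fin N) => (∑ s, l s * f s A) ≠ C'),
        C' * (1 + δ * σ) < (∑ s, l s * f s A) + δ * ∑ s, ν s * f s A := by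
    rw [Finset.eventually_all]
    intro A hA
    have hAgt : C' < ∑ s, l s * f s A :=
      lt_of_le_of_ne (hgle A) (Ne.symm (mem_filter.mp hA).2)
    have ht1 : Filter.Tendsto (fun δ : ℝ => C' * (1 + δ * σ))
        (nhdsWithin 0 (Set.Ioi 0)) (nhds C') := by
      have hcont : Continuous fun δ : ℝ => C' * (1 + δ * σ) := by continuity
      have := hcont.tendsto 0
      simp only [zero_mul, add_zero, mul_one] at this
      exact this.mono_left nhdsWithin_le_nhds
    have ht2 : Filter.Tendsto (fun δ : ℝ => (∑ s, l s * f s A) + δ * ∑ s, ν s * f s A)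
        (nhdsWithin 0 (Set.Ioi 0)) (nhds (∑ s, l s * f s A)) := by
      have hcont : Continuous fun δ : ℝ => (∑ s, l s * f s A) + δ * ∑ s, ν s * f s A := by
        continuity
      have := hcont.tendsto 0
      simp only [zero_mul, add_zero] at this
      exact this.mono_left nhdsWithin_le_nhds
    exact ht1.eventually_lt ht2 hAgt
  obtain ⟨δ, h1, h2, h3, h4⟩ := ((E1.and (E2.and (E3.and E4)))).exists
  set d := 1 + δ * σ with hddef
  have hd0 : 0 < d := h2
  have hd1 : d < 1 := by
    simp only [hddef]; linarith [h3]
  set l' := fun s => (l s + δ * ν s) / d with hl'def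
  have hl'0 : ∀ s, 0 ≤ l' s := fun s => div_nonneg (h1 s (mem_univ s)) hd0.le
  have hl'sum : ∑ s, l' s = 1 := by
    simp only [hl'def]
    rw [← Finset.sum_div, Finset.sum_add_distrib, ← Finset.mul_sum, hlsum, ← hσdef]
    exact div_self hd0.ne'
  have hg' : ∀ A : Finset (Fin N),
      (∑ s, l' s * f s A) = ((∑ s, l s * f s A) + δ * ∑ s, ν s * f s A) / d := by
    intro A
    have hterm : ∀ s, l' s * f s A = (l s * f s A + δ * (ν s * f s A)) / d := by
      intro s; simp only [hl'def]; field_simp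
    rw [Finset.sum_congr rfl fun s _ => hterm s, ← Finset.sum_div,
      Finset.sum_add_distrib, ← Finset.mul_sum]
  have hgt : ∀ A : Finset (Fin N), C' < ∑ s, l' s * f s A := by
    intro A
    by_cases hA : (∑ s, l s * f s A) = C'
    · rw [hg', hνperp A hA, hA, mul_zero, add_zero, lt_div_iff₀ hd0]
      calc C' * d < C' * 1 := mul_lt_mul_of_pos_left hd1 hpos
        _ = C' := mul_one C'
    · have h4A := h4 A (mem_filter.mpr ⟨mem_univ A, hA⟩)
      rw [hg', lt_div_iff₀ hd0]
      exact h4A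
  obtain ⟨A0, hA0⟩ := hmvle l' ⟨hl'0, hl'sum⟩
  exact absurd hA0 (not_le.mpr (hgt A0))

set_option maxHeartbeats 1000000 in
/-- main theorem, abstract form: for nonnegative submodular set
functions `f s`, `s ∈ [0 : 2^N - 1]`, and
`C' = max_{λ ∈ Δ} min_{A ⊆ [N]} Σ_s λ_s f_s(A)`, if `C' > 0` then there is an optimal
probability vector `λ*` achieving `C'` with at most `N+1` strictly positive entries. -/
theorem simple_schedules_optimal (N : ℕ)
    (f : Fin (2 ^ N) → Finset (Fin N) → ℝ)
    (hf : ∀ s, ∀ A B : Finset (Fin N), f s A + f s B ≥ f s (A ∪ B) + f s (A ∩ B))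
    (hf0 : ∀ s A, 0 ≤ f s A)
    (C' : ℝ)
    (hC' : C' = sSup {v : ℝ | ∃ l : Fin (2 ^ N) → ℝ,
        ((∀ s, 0 ≤ l s) ∧ ∑ s, l s = 1) ∧
        v = sInf {u : ℝ | ∃ A : Finset (Fin N), u = ∑ s, l s * f s A}})
    (hpos : 0 < C') :
    ∃ l : Fin (2 ^ N) → ℝ,
      ((∀ s, 0 ≤ l s) ∧ ∑ s, l s = 1) ∧
      sInf {u : ℝ | ∃ A : Finset (Fin N), u = ∑ s, l s * f s A} = C' ∧
      (Finset.univ.filter (fun s => 0 < l s)).card ≤ N + 1 := by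
  classical
  set g : (Fin (2 ^ N) → ℝ) → Finset (Fin N) → ℝ := fun l A => ∑ s, l s * f s A with hgdef
  set mv : (Fin (2 ^ N) → ℝ) → ℝ :=
    fun l => sInf {u : ℝ | ∃ A : Finset (Fin N), u = g l A} with hmvdef
  have hmv_ex : ∀ l, ∃ A, mv l = g l A := fun l => (mval_exists (g l)).1
  have hmv_le : ∀ l A, mv l ≤ g l A := fun l => (mval_exists (g l)).2
  -- continuity of mv
  have hmv_inf' : ∀ l, mv l = Finset.univ.inf' univ_nonempty (g l) := fun l => sInf_eq_inf' (g l)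
  have hcont : Continuous mv := by
    have : Continuous fun l => Finset.univ.inf' univ_nonempty (g l) := by
      apply continuous_finset_inf'
      intro A
      exact continuous_finset_sum _ fun s _ => (continuous_apply s).mul continuous_const
    exact this.congr fun l => (hmv_inf' l).symm
  -- maximizer over the simplex
  have hsimplex_ne : (stdSimplex ℝ (Fin (2 ^ N))).Nonempty := by
    refine ⟨fun _ => (2 ^ N : ℝ)⁻¹, fun s => by positivity, ?_⟩
    rw [Finset.sum_const, card_univ, Fintype.card_fin, nsmul_eq_mul]
    push_cast
    rw [mul_inv_cancel₀ (by positivity : (2:ℝ)^N ≠ 0)]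
  obtain ⟨l0, hl0Δ, hl0max⟩ :=
    (isCompact_stdSimplex ℝ (Fin (2 ^ N))).exists_isMaxOn hsimplex_ne hcont.continuousOn
  have hl0max' : ∀ l, ((∀ s, 0 ≤ l s) ∧ ∑ s, l s = 1) → mv l ≤ mv l0 := by
    intro l hl
    exact isMaxOn_iff.mp hl0max l hl
  have hVne : {v : ℝ | ∃ l : Fin (2 ^ N) → ℝ,
      ((∀ s, 0 ≤ l s) ∧ ∑ s, l s = 1) ∧
      v = sInf {u : ℝ | ∃ A : Finset (Fin N), u = ∑ s, l s * f s A}}.Nonempty :=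
    ⟨mv l0, l0, hl0Δ, rfl⟩
  have hC'eq : C' = mv l0 := by
    rw [hC']
    apply le_antisymm
    · apply csSup_le hVne
      rintro v ⟨l, hl, rfl⟩
      exact hl0max' l hl
    · apply le_csSup
      · exact ⟨mv l0, by rintro v ⟨l, hl, rfl⟩; exact hl0max' l hl⟩
      · exact ⟨l0, hl0Δ, rfl⟩
  have hmvle : ∀ l, ((∀ s, 0 ≤ l s) ∧ ∑ s, l s = 1) → mv l ≤ C' := by
    intro l hl; rw [hC'eq]; exact hl0max' l hl
  -- the set of optimizers
  set O : Set (Fin (2 ^ N) → ℝ) :=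
    {l | ((∀ s, 0 ≤ l s) ∧ ∑ s, l s = 1) ∧ mv l = C'} with hOdef
  have hl0O : l0 ∈ O := ⟨hl0Δ, hC'eq.symm⟩
  set suppc : (Fin (2 ^ N) → ℝ) → ℕ := fun l => (univ.filter fun s => 0 < l s).card with hsuppdef
  set n0 : ℕ := sInf {n | ∃ l ∈ O, suppc l = n} with hn0def
  have hNSne : {n | ∃ l ∈ O, suppc l = n}.Nonempty := ⟨suppc l0, l0, hl0O, rfl⟩
  have hn0mem : ∃ l ∈ O, suppc l = n0 := Nat.sInf_mem hNSne
  have hn0min : ∀ l ∈ O, n0 ≤ suppc l := fun l hl => Nat.sInf_le ⟨l, hl, rfl⟩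
  set mc : (Fin (2 ^ N) → ℝ) → ℕ := fun l => (univ.filter fun A => g l A = C').card with hmcdef
  have hKbdd : BddAbove {m | ∃ l ∈ O, suppc l = n0 ∧ mc l = m} := by
    refine ⟨Fintype.card (Finset (Fin N)), ?_⟩
    rintro m ⟨l, _, _, rfl⟩
    exact (card_filter_le _ _).trans (by rw [card_univ])
  set k0 : ℕ := sSup {m | ∃ l ∈ O, suppc l = n0 ∧ mc l = m} with hk0def
  obtain ⟨l1, hl1O, hl1s⟩ := hn0mem
  have hKSne : {m | ∃ l ∈ O, suppc l = n0 ∧ mc l = m}.Nonempty := ⟨mc l1, l1, hl1O, hl1s, rfl⟩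
  have hk0mem : ∃ l ∈ O, suppc l = n0 ∧ mc l = k0 :=
    Nat.sSup_mem hKSne hKbdd
  have hk0max : ∀ l ∈ O, suppc l = n0 → mc l ≤ k0 := fun l hl hs =>
    le_csSup hKbdd ⟨l, hl, hs, rfl⟩
  obtain ⟨l, hlO, hlsupp, hlmc⟩ := hk0mem
  -- it suffices that n0 ≤ N + 1
  have main : n0 ≤ N + 1 := by
    by_contra hbig
    push_neg at hbig
    obtain ⟨⟨hlle, hlsum⟩, hlmv⟩ := hlO
    set S : Finset (Fin (2 ^ N)) := univ.filter fun s => 0 < l s with hSdef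
    have hScard : S.card = n0 := hlsupp
    set M : Finset (Finset (Fin N)) := univ.filter fun A => g l A = C' with hMdef
    have hMmem : ∀ A, A ∈ M ↔ g l A = C' := fun A => by simp [hMdef]
    have hgle : ∀ A, C' ≤ g l A := fun A => hlmv ▸ hmv_le l A
    have hMne : M.Nonempty := by
      obtain ⟨A, hA⟩ := hmv_ex l
      exact ⟨A, (hMmem A).mpr (hA.symm.trans hlmv)⟩
    have hsubadd : ∀ A B, g l (A ∪ B) + g l (A ∩ B) ≤ g l A + g l B := by
      intro A B
      have hterm : ∀ s : Fin (2 ^ N),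
          l s * f s (A ∪ B) + l s * f s (A ∩ B) ≤ l s * f s A + l s * f s B := by
        intro s
        rw [← mul_add, ← mul_add]
        exact mul_le_mul_of_nonneg_left (hf s A B) (hlle s)
      calc g l (A ∪ B) + g l (A ∩ B)
          = ∑ s, (l s * f s (A ∪ B) + l s * f s (A ∩ B)) := by
            simp only [hgdef, Finset.sum_add_distrib]
        _ ≤ ∑ s, (l s * f s A + l s * f s B) := Finset.sum_le_sum fun s _ => hterm s
        _ = g l A + g l B := by simp only [hgdef, Finset.sum_add_distrib]
    have hMu : ∀ A ∈ M, ∀ B ∈ M, A ∪ B ∈ M := by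
      intro A hA B hB
      have hA' := (hMmem A).mp hA; have hB' := (hMmem B).mp hB
      have h1 := hgle (A ∪ B); have h2 := hgle (A ∩ B); have h3 := hsubadd A B
      exact (hMmem _).mpr (by linarith)
    have hMi : ∀ A ∈ M, ∀ B ∈ M, A ∩ B ∈ M := by
      intro A hA B hB
      have hA' := (hMmem A).mp hA; have hB' := (hMmem B).mp hB
      have h1 := hgle (A ∪ B); have h2 := hgle (A ∩ B); have h3 := hsubadd A B
      exact (hMmem _).mpr (by linarith)
    have hmod : ∀ s, 0 < l s → ∀ A ∈ M, ∀ B ∈ M,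
        f s A + f s B = f s (A ∪ B) + f s (A ∩ B) := by
      intro s hs A hA B hB
      have hsum0 : ∑ t, l t * (f t A + f t B - f t (A ∪ B) - f t (A ∩ B)) = 0 := by
        have hexp : ∑ t, l t * (f t A + f t B - f t (A ∪ B) - f t (A ∩ B))
            = g l A + g l B - g l (A ∪ B) - g l (A ∩ B) := by
          simp only [hgdef, mul_add, mul_sub, Finset.sum_add_distrib, Finset.sum_sub_distrib]
        rw [hexp, (hMmem A).mp hA, (hMmem B).mp hB, (hMmem _).mp (hMu A hA B hB),
          (hMmem _).mp (hMi A hA B hB)]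
        ring
      have hterm := (Finset.sum_eq_zero_iff_of_nonneg
        (fun t _ => mul_nonneg (hlle t) (by linarith [hf t A B]))).mp hsum0 s (mem_univ s)
      rcases mul_eq_zero.mp hterm with h | h
      · exact absurd h hs.ne'
      · linarith
    set T : Finset (Fin N) := M.sup' hMne id with hTdef
    have hTM : T ∈ M := by
      have := Finset.sup'_mem (↑M : Set (Finset (Fin N)))
        (fun x hx y hy => hMu x hx y hy) M hMne id (fun i hi => hi)
      exact this
    have hTtop : ∀ A ∈ M, A ⊆ T := fun A hA => Finset.le_sup' id hA
    set bo : Finset (Fin N) := M.inf' hMne id with hbodef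
    have hboM : bo ∈ M := by
      have := Finset.inf'_mem (↑M : Set (Finset (Fin N)))
        (fun x hx y hy => hMi x hx y hy) M hMne id (fun i hi => hi)
      exact this
    have hbo : ∀ A ∈ M, bo ⊆ A := fun A hA => Finset.inf'_le id hA
    obtain ⟨k, c, hk, hc0, hck, hcM, hmono, hbetw⟩ :=
      exists_chain M hMne T hTM hTtop (T \ bo).card bo hboM le_rfl
    have hkN : k ≤ N := by
      refine hk.trans ?_
      calc (T \ bo).card ≤ T.card := card_le_card sdiff_subset
        _ ≤ (univ : Finset (Fin N)).card := card_le_univ T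
        _ = N := by rw [card_univ, Fintype.card_fin]
    have hc0' : ∀ A ∈ M, c 0 ⊆ A := fun A hA => by rw [hc0]; exact hbo A hA
    have hck' : ∀ A ∈ M, A ⊆ c k := fun A hA => by rw [hck]; exact hTtop A hA
    set Φ : (↥S → ℝ) →ₗ[ℝ] (Fin (k + 1) → ℝ) :=
      { toFun := fun μ j => ∑ s : ↥S, μ s * f s.1 (c j.1),
        map_add' := by
          intro x y; funext j
          simp only [Pi.add_apply, add_mul, Finset.sum_add_distrib]
        map_smul' := by
          intro r x; funext j
          simp only [Pi.smul_apply, smul_eq_mul, RingHom.id_apply, Finset.mul_sum,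
            mul_assoc] } with hΦdef
    have hnotinj : ¬ Function.Injective Φ := by
      intro hinj
      have h1 := LinearMap.finrank_le_finrank_of_injective hinj
      rw [Module.finrank_fintype_fun_eq_card, Module.finrank_fintype_fun_eq_card,
        Fintype.card_coe, Fintype.card_fin, hScard] at h1
      omega
    obtain ⟨a, b, hab, habne⟩ := Function.not_injective_iff.mp hnotinj
    set μS : ↥S → ℝ := a - b with hμSdef
    have hμS0 : Φ μS = 0 := by rw [hμSdef, map_sub, hab, sub_self]
    have hμSne : μS ≠ 0 := sub_ne_zero.mpr habne
    set μ : Fin (2 ^ N) → ℝ := fun s => if h : s ∈ S then μS ⟨s, h⟩ else 0 with hμdef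
    have hμout : ∀ s, s ∉ S → μ s = 0 := fun s hs => dif_neg hs
    have hμpos : ∀ s, μ s ≠ 0 → 0 < l s := by
      intro s hs
      by_cases h : s ∈ S
      · exact (mem_filter.mp h).2
      · exact absurd (hμout s h) hs
    have hμne : ∃ s, μ s ≠ 0 := by
      obtain ⟨t, ht⟩ := Function.ne_iff.mp hμSne
      refine ⟨t.1, ?_⟩
      have hcoe : μ t.1 = μS t := by
        simp only [hμdef, dif_pos t.2, Subtype.coe_eta]
      rw [hcoe]
      simpa using ht
    have hsum_eq : ∀ A : Finset (Fin N),
        ∑ s, μ s * f s A = ∑ s : ↥S, μS s * f s.1 A := by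
      intro A
      have h1 : ∑ s, μ s * f s A = ∑ s ∈ S, μ s * f s A :=
        (Finset.sum_subset (subset_univ S)
          (fun x _ hx => by rw [hμout x hx, zero_mul])).symm
      rw [h1, ← Finset.sum_coe_sort S (fun s => μ s * f s A)]
      refine Finset.sum_congr rfl fun s _ => ?_
      simp only [hμdef, dif_pos s.2, Subtype.coe_eta]
    have hμchain : ∀ j ≤ k, ∑ s, μ s * f s (c j) = 0 := by
      intro j hj
      have hcomp := congrFun hμS0 ⟨j, by omega⟩
      simp only [hΦdef, LinearMap.coe_mk, AddHom.coe_mk, Pi.zero_apply] at hcomp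
      rw [hsum_eq]
      exact hcomp
    have hμperp : ∀ A ∈ M, ∑ s, μ s * f s A = 0 :=
      perp_of_chain f M hMu hMi μ
        (fun s hs A hA B hB => hmod s (hμpos s hs) A hA B hB)
        k c hc0' hck' hcM hmono hbetw hμchain
    have hmvle' : ∀ l' : Fin (2 ^ N) → ℝ, ((∀ s, 0 ≤ l' s) ∧ ∑ s, l' s = 1) →
        ∃ A : Finset (Fin N), (∑ s, l' s * f s A) ≤ C' := by
      intro l' hl'
      obtain ⟨A, hA⟩ := hmv_ex l'
      refine ⟨A, ?_⟩
      show g l' A ≤ C'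
      rw [← hA]
      exact hmvle l' hl'
    rcases eq_or_ne (∑ s, μ s) 0 with hσ0 | hσne
    · -- pivot case
      have hneg : ∃ s, μ s < 0 := by
        by_contra h
        push_neg at h
        obtain ⟨s, hs⟩ := hμne
        exact hs ((Finset.sum_eq_zero_iff_of_nonneg (fun t _ => h t)).mp hσ0 s (mem_univ s))
      set Fneg : Finset (Fin (2 ^ N)) := univ.filter fun s => μ s < 0 with hFdef
      have hFne : Fneg.Nonempty := by
        obtain ⟨s, hs⟩ := hneg
        exact ⟨s, mem_filter.mpr ⟨mem_univ s, hs⟩⟩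
      set t1 := Fneg.inf' hFne (fun s => l s / (-μ s)) with ht1def
      have ht1pos : 0 < t1 := by
        rw [ht1def, Finset.lt_inf'_iff]
        intro s hs
        have hμs : μ s < 0 := (mem_filter.mp hs).2
        exact div_pos (hμpos s hμs.ne) (neg_pos.mpr hμs)
      set Cneg : Finset (Finset (Fin N)) :=
        univ.filter fun A => (∑ s, μ s * f s A) < 0 with hCdef
      have hCnegM : ∀ A ∈ Cneg, A ∉ M ∧ C' < g l A := by
        intro A hA
        have hA' := (mem_filter.mp hA).2
        have hnM : A ∉ M := fun hm => by
          rw [hμperp A hm] at hA'; exact lt_irrefl 0 hA'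
        exact ⟨hnM, lt_of_le_of_ne (hgle A) (fun h => hnM ((hMmem A).mpr h.symm))⟩
      set t2 := if hC : Cneg.Nonempty then
          Cneg.inf' hC (fun A => (g l A - C') / (-(∑ s, μ s * f s A))) else t1 with ht2def
      have ht2pos : 0 < t2 := by
        rw [ht2def]
        split_ifs with hC
        · rw [Finset.lt_inf'_iff]
          intro A hA
          obtain ⟨_, hgt⟩ := hCnegM A hA
          exact div_pos (by linarith) (neg_pos.mpr (mem_filter.mp hA).2)
        · exact ht1pos
      set t := min t1 t2 with htdef
      have htpos : 0 < t := lt_min ht1pos ht2pos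
      set l' : Fin (2 ^ N) → ℝ := fun s => l s + t * μ s with hl'def
      have hl'0 : ∀ s, 0 ≤ l' s := by
        intro s
        rcases le_or_gt 0 (μ s) with h | h
        · have h1 := mul_nonneg htpos.le h
          have h2 := hlle s
          show 0 ≤ l s + t * μ s
          linarith
        · have hsF : s ∈ Fneg := mem_filter.mpr ⟨mem_univ s, h⟩
          have h1 : t ≤ l s / (-μ s) :=
            le_trans (min_le_left t1 t2) (Finset.inf'_le _ hsF)
          have h2 : t * (-μ s) ≤ l s := by
            rw [← le_div_iff₀ (neg_pos.mpr h)]; exact h1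
          show 0 ≤ l s + t * μ s
          nlinarith
      have hl'sum : ∑ s, l' s = 1 := by
        show ∑ s, (l s + t * μ s) = 1
        rw [Finset.sum_add_distrib, ← Finset.mul_sum, hσ0, hlsum, mul_zero, add_zero]
      have hg'B : ∀ A, g l' A = g l A + t * ∑ s, μ s * f s A := by
        intro A
        show ∑ s, (l s + t * μ s) * f s A = (∑ s, l s * f s A) + t * ∑ s, μ s * f s A
        rw [Finset.sum_congr rfl
          (fun s _ => by ring :
            ∀ s ∈ univ, (l s + t * μ s) * f s A = l s * f s A + t * (μ s * f s A)),
          Finset.sum_add_distrib, ← Finset.mul_sum]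
      have hge' : ∀ A, C' ≤ g l' A := by
        intro A
        rcases le_or_gt 0 (∑ s, μ s * f s A) with h | h
        · have h1 := hgle A
          have h2 := mul_nonneg htpos.le h
          rw [hg'B]; linarith
        · have hAC : A ∈ Cneg := mem_filter.mpr ⟨mem_univ A, h⟩
          have hCne : Cneg.Nonempty := ⟨A, hAC⟩
          have ht2val : t2 = Cneg.inf' hCne
              (fun A => (g l A - C') / (-(∑ s, μ s * f s A))) := by
            rw [ht2def, dif_pos hCne]
          have h1 : t ≤ (g l A - C') / (-(∑ s, μ s * f s A)) :=
            le_trans (min_le_right t1 t2) (ht2val ▸ Finset.inf'_le _ hAC)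
          have h2 : t * (-(∑ s, μ s * f s A)) ≤ g l A - C' := by
            rw [← le_div_iff₀ (neg_pos.mpr h)]; exact h1
          rw [hg'B]; nlinarith
      have hMval : ∀ A ∈ M, g l' A = C' := by
        intro A hA
        rw [hg'B, hμperp A hA, (hMmem A).mp hA, mul_zero, add_zero]
      have hl'mv : mv l' = C' := by
        obtain ⟨A0, hA0⟩ := hmv_ex l'
        apply le_antisymm
        · obtain ⟨B, hB⟩ := hMne
          exact (hmv_le l' B).trans_eq (hMval B hB)
        · rw [hA0]; exact hge' A0
      have hl'O : l' ∈ O := ⟨⟨hl'0, hl'sum⟩, hl'mv⟩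
      have hsupp' : ∀ s, 0 < l' s → s ∈ S := by
        intro s hs
        by_contra hsS
        have h2 : ¬ 0 < l s := fun hp => hsS (mem_filter.mpr ⟨mem_univ s, hp⟩)
        have hls : l s = 0 := le_antisymm (not_lt.mp h2) (hlle s)
        have hμs : μ s = 0 := hμout s hsS
        have : l' s = 0 := by show l s + t * μ s = 0; rw [hls, hμs, mul_zero, add_zero]
        rw [this] at hs
        exact lt_irrefl 0 hs
      rcases le_or_gt t1 t2 with hcase | hcase
      · obtain ⟨s0, hs0F, hs0⟩ := Finset.exists_mem_eq_inf' hFne (fun s => l s / (-μ s))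
        have hμs0 : μ s0 < 0 := (mem_filter.mp hs0F).2
        have ht : t = l s0 / (-μ s0) := by rw [htdef, min_eq_left hcase]; exact hs0
        have hl's0 : l' s0 = 0 := by
          show l s0 + t * μ s0 = 0
          rw [ht, div_mul_eq_mul_div, mul_div_assoc, div_neg, div_self hμs0.ne,
            mul_neg, mul_one, add_neg_cancel]
        have hs0S : s0 ∈ S := mem_filter.mpr ⟨mem_univ s0, hμpos s0 hμs0.ne⟩
        have hsub : (univ.filter fun s => 0 < l' s) ⊆ S.erase s0 := by
          intro s hs
          have hsp := (mem_filter.mp hs).2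
          refine mem_erase.mpr ⟨?_, hsupp' s hsp⟩
          rintro rfl
          rw [hl's0] at hsp
          exact lt_irrefl 0 hsp
        have hcard : suppc l' < n0 := by
          calc (univ.filter fun s => 0 < l' s).card
              ≤ (S.erase s0).card := card_le_card hsub
            _ < S.card := card_erase_lt_of_mem hs0S
            _ = n0 := hScard
        exact absurd (hn0min l' hl'O) (by omega)
      · have hCne : Cneg.Nonempty := by
          by_contra hC
          rw [ht2def, dif_neg hC] at hcase
          exact lt_irrefl t1 hcase
        have ht2val : t2 = Cneg.inf' hCne
            (fun A => (g l A - C') / (-(∑ s, μ s * f s A))) := by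
          rw [ht2def, dif_pos hCne]
        obtain ⟨A0, hA0C, hA0⟩ := Finset.exists_mem_eq_inf' hCne
          (fun A => (g l A - C') / (-(∑ s, μ s * f s A)))
        have hpA0 : (∑ s, μ s * f s A0) < 0 := (mem_filter.mp hA0C).2
        obtain ⟨hA0M, hA0gt⟩ := hCnegM A0 hA0C
        have ht : t = (g l A0 - C') / (-(∑ s, μ s * f s A0)) := by
          rw [htdef, min_eq_right hcase.le, ht2val]; exact hA0
        have hA0' : g l' A0 = C' := by
          have hne0 : (∑ s, μ s * f s A0) ≠ 0 := hpA0.ne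
          have hp : (∑ s, μ s * f s A0) / -(∑ s, μ s * f s A0) = -1 := by
            rw [div_neg, div_self hne0]
          rw [hg'B, ht, div_mul_eq_mul_div, mul_div_assoc, hp, mul_neg, mul_one]
          ring
        have hsubM : M ⊆ univ.filter fun A => g l' A = C' :=
          fun A hA => mem_filter.mpr ⟨mem_univ A, hMval A hA⟩
        have hssub : M ⊂ univ.filter fun A => g l' A = C' :=
          ⟨hsubM, fun hback => hA0M (hback (mem_filter.mpr ⟨mem_univ A0, hA0'⟩))⟩
        have hcardlt : mc l < mc l' := card_lt_card hssub
        have hle' : suppc l' ≤ n0 := by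
          rw [← hScard]
          exact card_le_card fun s hs => hsupp' s (mem_filter.mp hs).2
        have heq : suppc l' = n0 := le_antisymm hle' (hn0min l' hl'O)
        have hfin := hk0max l' hl'O heq
        omega
    · -- nonzero mass case: contradiction with optimality
      have hperp' : ∀ A : Finset (Fin N),
          (∑ s, l s * f s A) = C' → (∑ s, μ s * f s A) = 0 :=
        fun A hA => hμperp A ((hMmem A).mpr hA)
      rcases hσne.lt_or_gt with h | h
      · exact no_neg_mass f C' hpos l hlle hlsum hgle hmvle' μ hμpos hperp' h
      · refine no_neg_mass f C' hpos l hlle hlsum hgle hmvle' (fun s => -μ s)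
          (fun s hs => hμpos s (by simpa using hs)) ?_ ?_
        · intro A hA
          have := hperp' A hA
          simp only [neg_mul]
          rw [Finset.sum_neg_distrib, this, neg_zero]
        · rw [Finset.sum_neg_distrib]
          linarith
  exact ⟨l, hlO.1, hlO.2, by rw [show (univ.filter fun s => 0 < l s).card = suppc l from rfl, hlsupp]; exact main⟩
end

section
/- Let f : 2^{[N]} → ℝ be submodular with f(∅) = 0, w ∈ ℝ^N with w ≥ 0, and x the greedy vector for a permutation π sorting w in nonincreasing order. Then for every y ∈ P(f), wᵀy ≤ wᵀx; i.e., the greedy vector is optimal for the linear program max{wᵀy : y ∈ P(f)}. -/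
open Finset

lemma abel_aux (a z : ℕ → ℝ) (n : ℕ) :
    ∑ i ∈ Finset.range n, a i * z i =
      (∑ i ∈ Finset.range n, (a i - a (i+1)) * ∑ j ∈ Finset.range (i+1), z j)
        + a n * ∑ j ∈ Finset.range n, z j := by
  induction n with
  | zero => simp
  | succ n ih =>
      rw [Finset.sum_range_succ, ih,
        Finset.sum_range_succ (fun i => (a i - a (i+1)) * ∑ j ∈ Finset.range (i+1), z j),
        Finset.sum_range_succ z]
      ring

/-- the greedy vector `x` (for a permutation `π` sorting the nonnegative
weights `w` nonincreasingly) satisfies `wᵀy ≤ wᵀx` for every `y` in the submodular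
polyhedron `P(f)`. -/
theorem greedy_dominates_polyhedron (N : ℕ) (f : Finset (Fin N) → ℝ)
    (hf : ∀ A B : Finset (Fin N), f A + f B ≥ f (A ∪ B) + f (A ∩ B))
    (h0 : f ∅ = 0) (w : Fin N → ℝ) (hw : ∀ i, 0 ≤ w i)
    (π : Equiv.Perm (Fin N))
    (hsort : ∀ i j : Fin N, i ≤ j → w (π j) ≤ w (π i))
    (chain : ℕ → Finset (Fin N))
    (hchain : ∀ i, chain i = Finset.univ.filter (fun j : Fin N => (π.symm j : ℕ) < i))
    (x : Fin N → ℝ)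
    (hx : ∀ j : Fin N, x j = f (chain ((π.symm j : ℕ) + 1)) - f (chain (π.symm j : ℕ))) :
    ∀ y : Fin N → ℝ, (∀ A : Finset (Fin N), ∑ i ∈ A, y i ≤ f A) →
      ∑ i, w i * y i ≤ ∑ i, w i * x i := by
  intro y hy
  set a : ℕ → ℝ := fun i => if h : i < N then w (π ⟨i, h⟩) else 0 with ha
  set zy : ℕ → ℝ := fun i => if h : i < N then y (π ⟨i, h⟩) else 0 with hzy
  set zx : ℕ → ℝ := fun i => if h : i < N then x (π ⟨i, h⟩) else 0 with hzx
  have haN : a N = 0 := dif_neg (lt_irrefl N)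
  have hchain0 : chain 0 = ∅ := by
    rw [hchain]; ext j; simp
  -- telescoping for x
  have hZx : ∀ k, k ≤ N → ∑ j ∈ Finset.range k, zx j = f (chain k) := by
    intro k hk
    have hcong : ∑ j ∈ Finset.range k, zx j
        = ∑ j ∈ Finset.range k, (f (chain (j+1)) - f (chain j)) := by
      apply Finset.sum_congr rfl
      intro j hj
      have hjN : j < N := lt_of_lt_of_le (Finset.mem_range.mp hj) hk
      simp only [hzx, dif_pos hjN, hx, Equiv.symm_apply_apply]
    rw [hcong, Finset.sum_range_sub (fun j => f (chain j)), hchain0, h0, sub_zero]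
  -- partial sums of y along the permutation are sums over the chain
  have hZy : ∀ k, k ≤ N → ∑ j ∈ Finset.range k, zy j = ∑ i ∈ chain k, y i := by
    intro k hk
    rw [hchain, Finset.sum_filter,
      ← Equiv.sum_comp π (fun j => if ((π.symm j : Fin N) : ℕ) < k then y j else 0)]
    simp only [Equiv.symm_apply_apply]
    have hc : ∀ i : Fin N, (if (i : ℕ) < k then y (π i) else 0)
        = (fun n => if n < k then zy n else 0) (i : ℕ) := by
      intro i
      simp only [hzy, dif_pos i.isLt, Fin.eta]
    rw [Finset.sum_congr rfl (fun i _ => hc i),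
      Fin.sum_univ_eq_sum_range (fun n => if n < k then zy n else 0) N, ← Finset.sum_filter]
    congr 1
    ext i
    simp only [Finset.mem_filter, Finset.mem_range]
    omega
  -- rewrite both sides via the permutation
  have hwy : ∑ i, w i * y i = ∑ i ∈ Finset.range N, a i * zy i := by
    rw [← Equiv.sum_comp π (fun i => w i * y i)]
    have hc : ∀ i : Fin N, w (π i) * y (π i) = (fun n => a n * zy n) (i : ℕ) := by
      intro i
      simp only [ha, hzy, dif_pos i.isLt, Fin.eta]
    rw [Finset.sum_congr rfl (fun i _ => hc i),
      Fin.sum_univ_eq_sum_range (fun n => a n * zy n) N]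
  have hwx : ∑ i, w i * x i = ∑ i ∈ Finset.range N, a i * zx i := by
    rw [← Equiv.sum_comp π (fun i => w i * x i)]
    have hc : ∀ i : Fin N, w (π i) * x (π i) = (fun n => a n * zx n) (i : ℕ) := by
      intro i
      simp only [ha, hzx, dif_pos i.isLt, Fin.eta]
    rw [Finset.sum_congr rfl (fun i _ => hc i),
      Fin.sum_univ_eq_sum_range (fun n => a n * zx n) N]
  rw [hwy, hwx, abel_aux a zy, abel_aux a zx]
  simp only [haN, zero_mul, add_zero]
  apply Finset.sum_le_sum
  intro i hi
  have hiN : i < N := Finset.mem_range.mp hi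
  have hcoef : 0 ≤ a i - a (i+1) := by
    by_cases h : i + 1 < N
    · have := hsort ⟨i, hiN⟩ ⟨i+1, h⟩ (by simp [Fin.le_def])
      simp only [ha, dif_pos hiN, dif_pos h]
      linarith
    · simp only [ha, dif_pos hiN, dif_neg h, sub_zero]
      exact hw _
  have h1 : ∑ j ∈ Finset.range (i+1), zy j ≤ f (chain (i+1)) := by
    rw [hZy (i+1) hiN]
    exact hy _
  rw [hZx (i+1) hiN]
  exact mul_le_mul_of_nonneg_left h1 hcoef
end
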